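/- Let p be a prime, k a positive integer, w a complex number with |w| ≤ 1, and let α_1, …, α_{2k}, β_1, …, β_{2k} be complex numbers with |Re α_j| < 1/2 and |Re β_j| < 1/2 for all j. Then the absolutely convergent sum, over all tuples (e_1, …, e_{2k}, e'_1, …, e'_{2k}) of non-negative integers satisfying ∑_{j=1}^k (e_j + e'_j) = ∑_{j=1}^k (e_{j+k} + e'_{j+k}), of w^{e'_1 + ⋯ + e'_k} · conj(w)^{e'_{k+1} + ⋯ + e'_{2k}} · p^{−∑_{j=1}^k e_j(1/2 + α_j) − ∑_{j=1}^k e_{j+k}(1/2 − α_{j+k}) − ∑_{j=1}^k e'_j(1/2 + β_j) − ∑_{j=1}^k e'_{j+k}(1/2 − β_{j+k})}, equals ∫_0^1 ∏_{j=1}^k (1 − e(θ) p^{-1/2 − α_j})^{-1} (1 − e(−θ) p^{-1/2 + α_{j+k}})^{-1} (1 − w e(θ) p^{-1/2 − β_j})^{-1} (1 − conj(w) e(−θ) p^{-1/2 + β_{j+k}})^{-1} dθ, where e(θ) = e^{2πiθ}. -/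

import Mathlib

open Complex Real MeasureTheory

section LocalFactorAux

/-- index type for the 4k geometric series -/
abbrev LFIdx (k : ℕ) : Type := Fin k ⊕ (Fin k ⊕ (Fin k ⊕ Fin k))

/-- signs of the exponential frequencies -/
def LFeps {k : ℕ} : LFIdx k → ℤ :=
  Sum.elim (fun _ => 1) (Sum.elim (fun _ => -1) (Sum.elim (fun _ => 1) fun _ => -1))

/-- the ratios of the geometric series -/
noncomputable def LFc (p : ℕ) (w : ℂ) {k : ℕ} (αp αm βp βm : Fin k → ℂ) : LFIdx k → ℂ :=
  Sum.elim (fun j => (p:ℂ) ^ (-(1/2:ℂ) - αp j))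
    (Sum.elim (fun j => (p:ℂ) ^ (-(1/2:ℂ) + αm j))
      (Sum.elim (fun j => w * (p:ℂ) ^ (-(1/2:ℂ) - βp j))
        (fun j => (starRingEnd ℂ) w * (p:ℂ) ^ (-(1/2:ℂ) + βm j))))

/-- the general term of the multiple Dirichlet series -/
noncomputable def LFG (p : ℕ) (w : ℂ) {k : ℕ} (αp αm βp βm : Fin k → ℂ)
    (t : (Fin k → ℕ) × (Fin k → ℕ) × (Fin k → ℕ) × (Fin k → ℕ)) : ℂ :=
  w ^ (∑ j, t.2.2.1 j) * (starRingEnd ℂ) w ^ (∑ j, t.2.2.2 j) *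
    (p : ℂ) ^ (-(∑ j, (t.1 j : ℂ) * (1 / 2 + αp j) +
      ∑ j, (t.2.1 j : ℂ) * (1 / 2 - αm j) +
      ∑ j, (t.2.2.1 j : ℂ) * (1 / 2 + βp j) +
      ∑ j, (t.2.2.2 j : ℂ) * (1 / 2 - βm j)))

/-- repackaging of exponent tuples -/
def LFequiv (k : ℕ) :
    (LFIdx k → ℕ) ≃ ((Fin k → ℕ) × (Fin k → ℕ) × (Fin k → ℕ) × (Fin k → ℕ)) :=
  (Equiv.sumArrowEquivProdArrow _ _ ℕ).trans <|
    (Equiv.refl _).prodCongr <| (Equiv.sumArrowEquivProdArrow _ _ ℕ).trans <|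
      (Equiv.refl _).prodCongr <| Equiv.sumArrowEquivProdArrow _ _ ℕ

lemma hasSum_geom_pi_fin : ∀ (n : ℕ) {𝕜 : Type} [NormedField 𝕜] [CompleteSpace 𝕜]
    (c : Fin n → 𝕜), (∀ i, ‖c i‖ < 1) →
    HasSum (fun q : Fin n → ℕ => ∏ i, c i ^ q i) (∏ i, (1 - c i)⁻¹)
  | 0, 𝕜, _, _, c, hc => by
    have h := hasSum_single (f := fun q : Fin 0 → ℕ => ∏ i, c i ^ q i)
      (fun _ => 0) (fun b hb => absurd (Subsingleton.elim b _) hb)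
    simpa using h
  | (n+1), 𝕜, _, _, c, hc => by
    have ihR := hasSum_geom_pi_fin n (fun i => ‖c i.succ‖)
      (fun i => by simpa using hc i.succ)
    have ihK := hasSum_geom_pi_fin n (fun i => c i.succ) (fun i => hc i.succ)
    have h1 : HasSum (fun a : ℕ => c 0 ^ a) (1 - c 0)⁻¹ :=
      hasSum_geometric_of_norm_lt_one (hc 0)
    have hsum : Summable (fun z : ℕ × (Fin n → ℕ) =>
        (c 0 ^ z.1) * ∏ i, c i.succ ^ z.2 i) := by
      apply summable_mul_of_summable_norm (f := fun a : ℕ => c 0 ^ a)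
        (g := fun q : Fin n → ℕ => ∏ i, c i.succ ^ q i)
      · simpa [norm_pow] using summable_geometric_of_lt_one (norm_nonneg (c 0)) (hc 0)
      · exact ihR.summable.congr fun q => by simp [norm_prod, norm_pow]
    have key := h1.mul ihK hsum
    rw [Fin.prod_univ_succ]
    refine (Fin.consEquiv (fun _ => ℕ)).hasSum_iff.mp ?_
    convert key using 1
    · rfl
    funext z
    simp [Fin.consEquiv, Fin.prod_univ_succ]

lemma hasSum_geom_pi {ι : Type} [Fintype ι] {𝕜 : Type} [NormedField 𝕜] [CompleteSpace 𝕜]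
    (c : ι → 𝕜) (hc : ∀ i, ‖c i‖ < 1) :
    HasSum (fun q : ι → ℕ => ∏ i, c i ^ q i) (∏ i, (1 - c i)⁻¹) := by
  classical
  let e := Fintype.equivFin ι
  have h := hasSum_geom_pi_fin (Fintype.card ι) (fun j => c (e.symm j)) (fun j => hc _)
  rw [← e.symm.prod_comp (fun i => (1 - c i)⁻¹)]
  refine ((Equiv.arrowCongr e (Equiv.refl ℕ)).symm.hasSum_iff).mp ?_
  convert h using 1
  funext r
  exact (e.symm.prod_comp
      (fun i => c i ^ ((Equiv.arrowCongr e (Equiv.refl ℕ)).symm r) i)).symm.trans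
    (Finset.prod_congr rfl (fun j _ => by simp [Equiv.arrowCongr]))

lemma integral_exp_int_eq (m : ℤ) :
    (∫ θ in (0:ℝ)..1, Complex.exp (2 * π * I * θ * m)) = if m = 0 then 1 else 0 := by
  rcases eq_or_ne m 0 with h | h
  · simp [h]
  · rw [if_neg h]
    have harg : ∀ θ : ℝ, 2 * (π:ℂ) * I * θ * m = (2 * π * I * m) * θ := fun θ => by ring
    simp_rw [harg]
    have hc : 2 * (π:ℂ) * I * m ≠ 0 := by
      simp [Real.pi_ne_zero, Complex.I_ne_zero, h, Complex.ofReal_ne_zero]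
    rw [integral_exp_mul_complex hc]
    have h1 : 2 * (π:ℂ) * I * m * 1 = m * (2 * π * I) := by ring
    have h0 : 2 * (π:ℂ) * I * m * 0 = 0 := by ring
    push_cast
    rw [h1, h0, Complex.exp_int_mul_two_pi_mul_I, Complex.exp_zero, sub_self, zero_div]

lemma norm_exp_two_pi_I_theta (θ : ℝ) (m : ℤ) : ‖Complex.exp (2 * π * I * θ * m)‖ = 1 := by
  have : 2 * (π:ℂ) * I * θ * m = ((2 * π * θ * m : ℝ) : ℂ) * I := by push_cast; ring
  rw [this]
  exact Complex.norm_exp_ofReal_mul_I _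

lemma tsum_restricted_eq_integral {ι : Type} [Fintype ι] (c : ι → ℂ) (hc : ∀ i, ‖c i‖ < 1)
    (ε : ι → ℤ) :
    (∑' q : {q : ι → ℕ // (∑ i, ε i * (q i : ℤ)) = 0}, ∏ i, c i ^ q.1 i) =
      ∫ θ in (0:ℝ)..1, ∏ i, (1 - c i * Complex.exp (2 * π * I * θ * ε i))⁻¹ := by
  classical
  have hcθ : ∀ θ : ℝ, ∀ i, ‖c i * Complex.exp (2 * (π:ℂ) * I * θ * ε i)‖ < 1 := by
    intro θ i
    rw [norm_mul, norm_exp_two_pi_I_theta, mul_one]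
    exact hc i
  set M : (ι → ℕ) → ℤ := fun q => ∑ i, ε i * (q i : ℤ) with hMdef
  set F : (ι → ℕ) → ℝ → ℂ :=
    fun q θ => (∏ i, c i ^ q i) * Complex.exp (2 * π * I * θ * M q) with hFdef
  have hterm : ∀ (θ : ℝ) (q : ι → ℕ),
      (∏ i, (c i * Complex.exp (2 * (π:ℂ) * I * θ * ε i)) ^ q i) = F q θ := by
    intro θ q
    simp only [hFdef, mul_pow, Finset.prod_mul_distrib]
    congr 1
    have h1 : ∀ i ∈ Finset.univ, Complex.exp (2 * (π:ℂ) * I * θ * ε i) ^ q i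
        = Complex.exp ((q i : ℂ) * (2 * π * I * θ * ε i)) := fun i _ =>
      (Complex.exp_nat_mul _ (q i)).symm
    rw [Finset.prod_congr rfl h1, ← Complex.exp_sum]
    congr 1
    rw [hMdef]
    push_cast
    rw [Finset.mul_sum]
    exact Finset.sum_congr rfl fun i _ => by ring
  have hHasSum : ∀ θ : ℝ, HasSum (fun q : ι → ℕ => F q θ)
      (∏ i, (1 - c i * Complex.exp (2 * π * I * θ * ε i))⁻¹) := by
    intro θ
    have h := hasSum_geom_pi (fun i => c i * Complex.exp (2 * (π:ℂ) * I * θ * ε i)) (hcθ θ)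
    rwa [funext (hterm θ)] at h
  have hFnorm : ∀ (q : ι → ℕ) (θ : ℝ), ‖F q θ‖ = ∏ i, ‖c i‖ ^ q i := by
    intro q θ
    rw [hFdef]
    rw [norm_mul, norm_exp_two_pi_I_theta, mul_one, norm_prod]
    simp [norm_pow]
  have hR : HasSum (fun q : ι → ℕ => ∏ i, ‖c i‖ ^ q i) (∏ i, (1 - ‖c i‖)⁻¹) :=
    hasSum_geom_pi _ (fun i => by simpa using hc i)
  have hFint : ∀ q : ι → ℕ, IntegrableOn (F q) (Set.Ioc (0:ℝ) 1) := by
    intro q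
    apply Continuous.integrableOn_Ioc
    apply continuous_const.mul
    exact Complex.continuous_exp.comp (by continuity)
  have hFintsum : Summable (fun q : ι → ℕ =>
      ∫ θ in Set.Ioc (0:ℝ) 1, ‖F q θ‖) := by
    apply hR.summable.congr
    intro q
    simp [hFnorm q]
  rw [intervalIntegral.integral_of_le zero_le_one]
  have hint : ∀ θ : ℝ, (∏ i, (1 - c i * Complex.exp (2 * π * I * θ * ε i))⁻¹)
      = ∑' q : ι → ℕ, F q θ := fun θ => (hHasSum θ).tsum_eq.symm
  simp only [hint]
  rw [← MeasureTheory.integral_tsum_of_summable_integral_norm hFint hFintsum]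
  have hIq : ∀ q : ι → ℕ, (∫ θ in Set.Ioc (0:ℝ) 1, F q θ)
      = (∏ i, c i ^ q i) * (if M q = 0 then 1 else 0) := by
    intro q
    rw [← intervalIntegral.integral_of_le zero_le_one]
    rw [hFdef]
    rw [intervalIntegral.integral_const_mul, integral_exp_int_eq]
  simp only [hIq]
  refine (tsum_subtype {q : ι → ℕ | (∑ i, ε i * (q i : ℤ)) = 0}
    (fun q => ∏ i, c i ^ q i)).trans (tsum_congr fun q => ?_)
  by_cases h : (∑ i, ε i * (q i : ℤ)) = 0
  · simp [Set.indicator_apply, h, hMdef]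
  · simp [Set.indicator_apply, h, hMdef]

lemma LFc_norm_lt (p : ℕ) (hp : 1 < p) {k : ℕ} (w : ℂ) (hw : ‖w‖ ≤ 1)
    (αp αm βp βm : Fin k → ℂ)
    (hα : ∀ j, |(αp j).re| < 1 / 2 ∧ |(αm j).re| < 1 / 2)
    (hβ : ∀ j, |(βp j).re| < 1 / 2 ∧ |(βm j).re| < 1 / 2) :
    ∀ i, ‖LFc p w αp αm βp βm i‖ < 1 := by
  have base : ∀ z : ℂ, z.re < 0 → ‖(p:ℂ) ^ z‖ < 1 := by
    intro z hz
    rw [Complex.norm_natCast_cpow_of_pos (by omega)]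
    exact Real.rpow_lt_one_of_one_lt_of_neg (by exact_mod_cast hp) hz
  have hwmul : ∀ (u : ℂ) (z : ℂ), ‖u‖ ≤ 1 → z.re < 0 → ‖u * (p:ℂ) ^ z‖ < 1 := by
    intro u z hu hz
    rw [norm_mul]
    calc ‖u‖ * ‖(p:ℂ) ^ z‖ ≤ 1 * ‖(p:ℂ) ^ z‖ := by
          gcongr
      _ = ‖(p:ℂ) ^ z‖ := one_mul _
      _ < 1 := base z hz
  have hre1 : ∀ z : ℂ, (-(1/2:ℂ) - z).re = -(1/2) - z.re := by intro z; simp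
  have hre2 : ∀ z : ℂ, (-(1/2:ℂ) + z).re = -(1/2) + z.re := by intro z; simp
  rintro (j | j | j | j) <;> simp only [LFc, Sum.elim_inl, Sum.elim_inr]
  · refine base _ ?_
    have h := abs_lt.mp (hα j).1
    rw [hre1]
    linarith [h.1]
  · refine base _ ?_
    have h := abs_lt.mp (hα j).2
    rw [hre2]
    linarith [h.2]
  · refine hwmul _ _ hw ?_
    have h := abs_lt.mp (hβ j).1
    rw [hre1]
    linarith [h.1]
  · refine hwmul _ _ (by rw [RCLike.norm_conj]; exact hw) ?_
    have h := abs_lt.mp (hβ j).2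
    rw [hre2]
    linarith [h.2]

lemma LF_cond_iff {k : ℕ} (q : LFIdx k → ℕ) :
    (∑ i, LFeps i * (q i : ℤ)) = 0 ↔
      (∑ j, (q (Sum.inl j) + q (Sum.inr (Sum.inr (Sum.inl j)))))
        = ∑ j, (q (Sum.inr (Sum.inl j)) + q (Sum.inr (Sum.inr (Sum.inr j)))) := by
  rw [Fintype.sum_sum_type, Fintype.sum_sum_type, Fintype.sum_sum_type]
  simp only [LFeps, Sum.elim_inl, Sum.elim_inr, one_mul, neg_mul, Finset.sum_neg_distrib]
  rw [← Nat.cast_inj (R := ℤ)]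
  push_cast
  rw [Finset.sum_add_distrib, Finset.sum_add_distrib]
  constructor <;> intro h <;> linarith

lemma LF_match_term (p : ℕ) (hp0 : (p:ℂ) ≠ 0) {k : ℕ} (w : ℂ)
    (αp αm βp βm : Fin k → ℂ) (q : LFIdx k → ℕ) :
    LFG p w αp αm βp βm (LFequiv k q) = ∏ i, LFc p w αp αm βp βm i ^ q i := by
  have hcpow : ∀ z : ℂ, (p:ℂ) ^ z = Complex.exp (Complex.log p * z) :=
    fun z => Complex.cpow_def_of_ne_zero hp0 z
  have hpiece : ∀ (n : Fin k → ℕ) (u : Fin k → ℂ),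
      (p:ℂ) ^ (-∑ j, (n j : ℂ) * u j) = ∏ j, ((p:ℂ) ^ (-u j)) ^ n j := by
    intro n u
    have h1 : ∀ j ∈ Finset.univ, ((p:ℂ) ^ (-u j)) ^ n j
        = Complex.exp ((n j : ℂ) * (Complex.log p * -u j)) := fun j _ => by
      rw [hcpow, ← Complex.exp_nat_mul]
    rw [Finset.prod_congr rfl h1, ← Complex.exp_sum, hcpow]
    congr 1
    have h2 : ∀ j ∈ Finset.univ, (n j : ℂ) * (Complex.log p * -u j)
        = -(Complex.log p * ((n j : ℂ) * u j)) := fun j _ => by ring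
    rw [Finset.sum_congr rfl h2, Finset.sum_neg_distrib, ← Finset.mul_sum, ← mul_neg]
  show w ^ (∑ j, q (Sum.inr (Sum.inr (Sum.inl j)))) *
      (starRingEnd ℂ) w ^ (∑ j, q (Sum.inr (Sum.inr (Sum.inr j)))) *
      (p : ℂ) ^ (-(∑ j, (q (Sum.inl j) : ℂ) * (1 / 2 + αp j) +
        ∑ j, (q (Sum.inr (Sum.inl j)) : ℂ) * (1 / 2 - αm j) +
        ∑ j, (q (Sum.inr (Sum.inr (Sum.inl j))) : ℂ) * (1 / 2 + βp j) +
        ∑ j, (q (Sum.inr (Sum.inr (Sum.inr j))) : ℂ) * (1 / 2 - βm j))) = _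
  rw [Fintype.prod_sum_type, Fintype.prod_sum_type, Fintype.prod_sum_type]
  simp only [LFc, Sum.elim_inl, Sum.elim_inr, mul_pow, Finset.prod_mul_distrib,
    Finset.prod_pow_eq_pow_sum]
  have e1 : ∀ j : Fin k, (-(1/2:ℂ) - αp j) = -((1/2:ℂ) + αp j) := fun j => by ring
  have e2 : ∀ j : Fin k, (-(1/2:ℂ) + αm j) = -((1/2:ℂ) - αm j) := fun j => by ring
  have e3 : ∀ j : Fin k, (-(1/2:ℂ) - βp j) = -((1/2:ℂ) + βp j) := fun j => by ring
  have e4 : ∀ j : Fin k, (-(1/2:ℂ) + βm j) = -((1/2:ℂ) - βm j) := fun j => by ring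
  simp only [e1, e2, e3, e4]
  rw [← hpiece, ← hpiece, ← hpiece, ← hpiece]
  simp only [neg_add]
  rw [Complex.cpow_add _ _ hp0, Complex.cpow_add _ _ hp0, Complex.cpow_add _ _ hp0]
  ring

def LFsubEquiv (k : ℕ) :
    {q : LFIdx k → ℕ // (∑ i, LFeps i * (q i : ℤ)) = 0} ≃
      {t : (Fin k → ℕ) × (Fin k → ℕ) × (Fin k → ℕ) × (Fin k → ℕ) //
        ∑ j, (t.1 j + t.2.2.1 j) = ∑ j, (t.2.1 j + t.2.2.2 j)} :=
  (LFequiv k).subtypeEquiv (fun q => LF_cond_iff q)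

lemma LFsubEquiv_fst {k : ℕ} (q : {q : LFIdx k → ℕ // (∑ i, LFeps i * (q i : ℤ)) = 0}) :
    (LFsubEquiv k q).1 = LFequiv k q.1 := rfl

end LocalFactorAux

/-- **Integral representation of the local factor `B_p(α,β)`.**  Let `p` be a prime, `k ≥ 1`,
`|w| ≤ 1`, and shifts `α_1,…,α_{2k}, β_1,…,β_{2k}` with real parts `< 1/2` in modulus;
here `αp j = α_j`, `αm j = α_{k+j}`, `βp j = β_j`, `βm j = β_{k+j}`, and the exponent
tuples are `e = (e_1,…,e_k)`, `f = (e_{k+1},…,e_{2k})`, `e' = (e'_1,…,e'_k)`,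
`f' = (e'_{k+1},…,e'_{2k})`.  The sum over all tuples with
`∑_j (e_j + e'_j) = ∑_j (f_j + f'_j)` of
`w^{∑ e'_j} conj(w)^{∑ f'_j} p^{-∑ e_j(1/2+α_j) - ∑ f_j(1/2-α_{k+j}) - ∑ e'_j(1/2+β_j) - ∑ f'_j(1/2-β_{k+j})}`
converges absolutely and equals
`∫_0^1 ∏_j (1-e(θ)p^{-1/2-α_j})⁻¹(1-e(-θ)p^{-1/2+α_{k+j}})⁻¹(1-we(θ)p^{-1/2-β_j})⁻¹(1-conj(w)e(-θ)p^{-1/2+β_{k+j}})⁻¹ dθ`. -/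
theorem local_factor_integral_representation
    (p : ℕ) (hp : p.Prime) (k : ℕ) (hk : 0 < k) (w : ℂ) (hw : ‖w‖ ≤ 1)
    (αp αm βp βm : Fin k → ℂ)
    (hα : ∀ j, |(αp j).re| < 1 / 2 ∧ |(αm j).re| < 1 / 2)
    (hβ : ∀ j, |(βp j).re| < 1 / 2 ∧ |(βm j).re| < 1 / 2) :
    Summable (fun q : {q : (Fin k → ℕ) × (Fin k → ℕ) × (Fin k → ℕ) × (Fin k → ℕ) //
        ∑ j, (q.1 j + q.2.2.1 j) = ∑ j, (q.2.1 j + q.2.2.2 j)} =>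
      ‖w ^ (∑ j, q.1.2.2.1 j) * (starRingEnd ℂ) w ^ (∑ j, q.1.2.2.2 j) *
        (p : ℂ) ^ (-(∑ j, (q.1.1 j : ℂ) * (1 / 2 + αp j) +
          ∑ j, (q.1.2.1 j : ℂ) * (1 / 2 - αm j) +
          ∑ j, (q.1.2.2.1 j : ℂ) * (1 / 2 + βp j) +
          ∑ j, (q.1.2.2.2 j : ℂ) * (1 / 2 - βm j)))‖) ∧
    (∑' q : {q : (Fin k → ℕ) × (Fin k → ℕ) × (Fin k → ℕ) × (Fin k → ℕ) //
        ∑ j, (q.1 j + q.2.2.1 j) = ∑ j, (q.2.1 j + q.2.2.2 j)},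
      w ^ (∑ j, q.1.2.2.1 j) * (starRingEnd ℂ) w ^ (∑ j, q.1.2.2.2 j) *
        (p : ℂ) ^ (-(∑ j, (q.1.1 j : ℂ) * (1 / 2 + αp j) +
          ∑ j, (q.1.2.1 j : ℂ) * (1 / 2 - αm j) +
          ∑ j, (q.1.2.2.1 j : ℂ) * (1 / 2 + βp j) +
          ∑ j, (q.1.2.2.2 j : ℂ) * (1 / 2 - βm j)))) =
      ∫ θ in (0:ℝ)..1, ∏ j : Fin k,
        ((1 - Complex.exp (2 * Real.pi * I * θ) * (p : ℂ) ^ (-(1 / 2 : ℂ) - αp j))⁻¹ *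
          (1 - Complex.exp (-(2 * Real.pi * I * θ)) * (p : ℂ) ^ (-(1 / 2 : ℂ) + αm j))⁻¹ *
          (1 - w * Complex.exp (2 * Real.pi * I * θ) * (p : ℂ) ^ (-(1 / 2 : ℂ) - βp j))⁻¹ *
          (1 - (starRingEnd ℂ) w * Complex.exp (-(2 * Real.pi * I * θ)) *
            (p : ℂ) ^ (-(1 / 2 : ℂ) + βm j))⁻¹) := by
  classical
  have hp1 : 1 < p := hp.one_lt
  have hp0 : (p:ℂ) ≠ 0 := Nat.cast_ne_zero.mpr hp.pos.ne'
  have hc : ∀ i, ‖LFc p w αp αm βp βm i‖ < 1 :=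
    LFc_norm_lt p hp1 w hw αp αm βp βm hα hβ
  have hGE : ∀ q : LFIdx k → ℕ,
      LFG p w αp αm βp βm (LFequiv k q) = ∏ i, LFc p w αp αm βp βm i ^ q i :=
    LF_match_term p hp0 w αp αm βp βm
  have hRsum : Summable (fun q : LFIdx k → ℕ => ‖LFG p w αp αm βp βm (LFequiv k q)‖) := by
    apply (hasSum_geom_pi (fun i => ‖LFc p w αp αm βp βm i‖)
      (fun i => by simpa using hc i)).summable.congr
    intro q
    rw [hGE q, norm_prod]
    simp [norm_pow]
  have hGsum : Summable (fun t : (Fin k → ℕ) × (Fin k → ℕ) × (Fin k → ℕ) × (Fin k → ℕ) =>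
      ‖LFG p w αp αm βp βm t‖) := (LFequiv k).summable_iff.mp hRsum
  constructor
  · exact hGsum.comp_injective Subtype.coe_injective
  · have key := tsum_restricted_eq_integral (LFc p w αp αm βp βm) hc (LFeps (k := k))
    have hInt : ∀ θ : ℝ,
        (∏ i, (1 - LFc p w αp αm βp βm i * Complex.exp (2 * π * I * θ * LFeps i))⁻¹)
        = ∏ j : Fin k,
          ((1 - Complex.exp (2 * Real.pi * I * θ) * (p : ℂ) ^ (-(1 / 2 : ℂ) - αp j))⁻¹ *
            (1 - Complex.exp (-(2 * Real.pi * I * θ)) * (p : ℂ) ^ (-(1 / 2 : ℂ) + αm j))⁻¹ *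
            (1 - w * Complex.exp (2 * Real.pi * I * θ) * (p : ℂ) ^ (-(1 / 2 : ℂ) - βp j))⁻¹ *
            (1 - (starRingEnd ℂ) w * Complex.exp (-(2 * Real.pi * I * θ)) *
              (p : ℂ) ^ (-(1 / 2 : ℂ) + βm j))⁻¹) := by
      intro θ
      rw [Fintype.prod_sum_type, Fintype.prod_sum_type, Fintype.prod_sum_type]
      simp only [LFc, LFeps, Sum.elim_inl, Sum.elim_inr, Int.cast_one, Int.cast_neg,
        mul_one, mul_neg_one]
      simp only [Finset.prod_mul_distrib]
      have E1 : (∏ j : Fin k, (1 - (p:ℂ) ^ (-(1/2:ℂ) - αp j) * Complex.exp (2*π*I*θ))⁻¹)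
          = ∏ j : Fin k, (1 - Complex.exp (2*π*I*θ) * (p:ℂ) ^ (-(1/2:ℂ) - αp j))⁻¹ :=
        Finset.prod_congr rfl fun j _ => by ring
      have E2 : (∏ j : Fin k, (1 - (p:ℂ) ^ (-(1/2:ℂ) + αm j) * Complex.exp (-(2*π*I*θ)))⁻¹)
          = ∏ j : Fin k, (1 - Complex.exp (-(2*π*I*θ)) * (p:ℂ) ^ (-(1/2:ℂ) + αm j))⁻¹ :=
        Finset.prod_congr rfl fun j _ => by ring
      have E3 : (∏ j : Fin k, (1 - w * (p:ℂ) ^ (-(1/2:ℂ) - βp j) * Complex.exp (2*π*I*θ))⁻¹)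
          = ∏ j : Fin k, (1 - w * Complex.exp (2*π*I*θ) * (p:ℂ) ^ (-(1/2:ℂ) - βp j))⁻¹ :=
        Finset.prod_congr rfl fun j _ => by ring
      have E4 : (∏ j : Fin k, (1 - (starRingEnd ℂ) w * (p:ℂ) ^ (-(1/2:ℂ) + βm j) *
            Complex.exp (-(2*π*I*θ)))⁻¹)
          = ∏ j : Fin k, (1 - (starRingEnd ℂ) w * Complex.exp (-(2*π*I*θ)) *
            (p:ℂ) ^ (-(1/2:ℂ) + βm j))⁻¹ :=
        Finset.prod_congr rfl fun j _ => by ring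
      rw [E1, E2, E3, E4]
      ring
    calc (∑' q : {t : (Fin k → ℕ) × (Fin k → ℕ) × (Fin k → ℕ) × (Fin k → ℕ) //
          ∑ j, (t.1 j + t.2.2.1 j) = ∑ j, (t.2.1 j + t.2.2.2 j)}, LFG p w αp αm βp βm q.1)
        = ∑' q : {q : LFIdx k → ℕ // (∑ i, LFeps i * (q i : ℤ)) = 0},
            LFG p w αp αm βp βm (LFsubEquiv k q).1 :=
          (Equiv.tsum_eq (LFsubEquiv k) (fun t => LFG p w αp αm βp βm t.1)).symm
      _ = ∑' q : {q : LFIdx k → ℕ // (∑ i, LFeps i * (q i : ℤ)) = 0},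
            ∏ i, LFc p w αp αm βp βm i ^ q.1 i := tsum_congr (fun q => hGE q.1)
      _ = ∫ θ in (0:ℝ)..1, ∏ i,
            (1 - LFc p w αp αm βp βm i * Complex.exp (2 * π * I * θ * LFeps i))⁻¹ := key
      _ = _ := intervalIntegral.integral_congr (fun θ _ => hInt θ)
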